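/- Let v¹,…,v^ℓ ∈ ℝ^ℓ be vectors and θ₀, θ₁,…,θ_ℓ > 0 with θ₀·(−u) + Σ_{i=1}^ℓ θ_i v^i = 0 for some u ∈ ℝ^ℓ, where the vectors v¹,…,v^ℓ are linearly independent. Then sup over unit vectors y ∈ ℝ^ℓ of min( −⟨u, y⟩, min_{1≤i≤ℓ} ⟨v^i, y⟩ ) is strictly negative; consequently there exists c > 0 such that for all y ∈ ℝ^ℓ, min( −⟨u, y⟩, min_i ⟨v^i, y⟩ ) ≤ −c‖y‖₂. -/

import Mathlib

open Finset

/-- if `0 = θ₀(-u) + Σ θ_i vⁱ` with all weights positive and the `vⁱ`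
linearly independent, then the sup over unit vectors of
`min(-⟨u,y⟩, min_i ⟨vⁱ,y⟩)` is strictly negative, and consequently there is `c > 0`
with `min(-⟨u,y⟩, min_i ⟨vⁱ,y⟩) ≤ -c‖y‖` for all `y`. -/
theorem stmt4 (ℓ : ℕ) (hℓ : 0 < ℓ) (v : Fin ℓ → EuclideanSpace ℝ (Fin ℓ))
    (u : EuclideanSpace ℝ (Fin ℓ)) (θ₀ : ℝ) (θ : Fin ℓ → ℝ)
    (hθ₀ : 0 < θ₀) (hθ : ∀ i, 0 < θ i) (hv : LinearIndependent ℝ v)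
    (hsum : θ₀ • (-u) + ∑ i, θ i • v i = 0) :
    sSup {m : ℝ | ∃ y : EuclideanSpace ℝ (Fin ℓ), ‖y‖ = 1 ∧
        m = min (-(inner ℝ u y : ℝ)) (⨅ i, (inner ℝ (v i) y : ℝ))} < 0 ∧
    ∃ c : ℝ, 0 < c ∧ ∀ y : EuclideanSpace ℝ (Fin ℓ),
      min (-(inner ℝ u y : ℝ)) (⨅ i, (inner ℝ (v i) y : ℝ)) ≤ -c * ‖y‖ := by
  haveI : Nonempty (Fin ℓ) := ⟨⟨0, hℓ⟩⟩
  set f : EuclideanSpace ℝ (Fin ℓ) → ℝ :=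
    fun y => min (-(inner ℝ u y : ℝ)) (⨅ i, (inner ℝ (v i) y : ℝ)) with hf
  -- f is negative on nonzero vectors
  have key : ∀ y : EuclideanSpace ℝ (Fin ℓ), y ≠ 0 → f y < 0 := by
    intro y hy
    by_contra h
    push_neg at h
    have h1 : 0 ≤ -(inner ℝ u y : ℝ) := le_trans h (min_le_left _ _)
    have h2 : ∀ i, 0 ≤ (inner ℝ (v i) y : ℝ) := fun i =>
      le_trans (le_trans h (min_le_right _ _)) (ciInf_le (Finite.bddBelow_range _) i)
    have hsum' : (∑ i, θ i • v i) = θ₀ • u := by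
      have h3 := neg_eq_of_add_eq_zero_right hsum
      rw [← h3, smul_neg, neg_neg]
    have hinner : ∑ i, θ i * (inner ℝ (v i) y : ℝ) = θ₀ * (inner ℝ u y : ℝ) := by
      have h4 := congrArg (fun z : EuclideanSpace ℝ (Fin ℓ) => (inner ℝ z y : ℝ)) hsum'
      simp only [sum_inner, real_inner_smul_left] at h4
      exact h4
    have hle : ∑ i, θ i * (inner ℝ (v i) y : ℝ) ≤ 0 := by
      rw [hinner]
      have : (inner ℝ u y : ℝ) ≤ 0 := by linarith
      exact mul_nonpos_of_nonneg_of_nonpos hθ₀.le this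
    have hzero : ∀ i ∈ Finset.univ, θ i * (inner ℝ (v i) y : ℝ) = 0 := by
      apply (Finset.sum_eq_zero_iff_of_nonneg ?_).1
      · exact le_antisymm hle (Finset.sum_nonneg fun i _ => mul_nonneg (hθ i).le (h2 i))
      · exact fun i _ => mul_nonneg (hθ i).le (h2 i)
    have hvy : ∀ i, (inner ℝ (v i) y : ℝ) = 0 := by
      intro i
      have := hzero i (Finset.mem_univ i)
      exact (mul_eq_zero.1 this).resolve_left (hθ i).ne'
    -- v is a basis, so y = 0
    have hcard : Fintype.card (Fin ℓ) = Module.finrank ℝ (EuclideanSpace ℝ (Fin ℓ)) := by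
      simp [finrank_euclideanSpace]
    let b := basisOfLinearIndependentOfCardEqFinrank hv hcard
    have hb : ⇑b = v := coe_basisOfLinearIndependentOfCardEqFinrank hv hcard
    have h0 : (inner ℝ y y : ℝ) = 0 := by
      nth_rewrite 1 [← b.sum_repr y]
      rw [sum_inner]
      apply Finset.sum_eq_zero
      intro i _
      rw [real_inner_smul_left, hb, hvy i, mul_zero]
    exact hy (inner_self_eq_zero.1 h0)
  -- the set is the image of the sphere under f
  have hset : {m : ℝ | ∃ y : EuclideanSpace ℝ (Fin ℓ), ‖y‖ = 1 ∧ m = f y}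
      = f '' Metric.sphere (0 : EuclideanSpace ℝ (Fin ℓ)) 1 := by
    ext m
    simp only [Set.mem_setOf_eq, Set.mem_image, mem_sphere_zero_iff_norm]
    exact ⟨fun ⟨y, h1, h2⟩ => ⟨y, h1, h2.symm⟩, fun ⟨y, h1, h2⟩ => ⟨y, h1, h2.symm⟩⟩
  -- continuity of f
  have hcont : Continuous f := by
    have hc1 : Continuous fun y : EuclideanSpace ℝ (Fin ℓ) => (inner ℝ u y : ℝ) :=
      Continuous.inner continuous_const continuous_id
    have hc2 : Continuous fun y : EuclideanSpace ℝ (Fin ℓ) =>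
        (⨅ i, (inner ℝ (v i) y : ℝ)) := by
      have : (fun y : EuclideanSpace ℝ (Fin ℓ) => (⨅ i, (inner ℝ (v i) y : ℝ)))
          = fun y => Finset.univ.inf' Finset.univ_nonempty
              (fun i => (inner ℝ (v i) y : ℝ)) := by
        funext y
        rw [Finset.inf'_univ_eq_ciInf]
      rw [this]
      exact Continuous.finset_inf'_apply Finset.univ_nonempty
        (fun i _ => Continuous.inner continuous_const continuous_id)
    exact hc1.neg.min hc2
  -- compact sphere, attain max
  have hcomp : IsCompact (Metric.sphere (0 : EuclideanSpace ℝ (Fin ℓ)) 1) :=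
    isCompact_sphere 0 1
  haveI : Nontrivial (EuclideanSpace ℝ (Fin ℓ)) :=
    Module.nontrivial_of_finrank_pos (R := ℝ) (by simp [finrank_euclideanSpace, hℓ])
  have hne : (Metric.sphere (0 : EuclideanSpace ℝ (Fin ℓ)) 1).Nonempty :=
    NormedSpace.sphere_nonempty.2 zero_le_one
  obtain ⟨y₀, hy₀mem, hy₀max⟩ := hcomp.exists_isMaxOn hne hcont.continuousOn
  have hy₀norm : ‖y₀‖ = 1 := mem_sphere_zero_iff_norm.1 hy₀mem
  have hy₀ne : y₀ ≠ 0 := fun h => by simp [h] at hy₀norm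
  have hmax : f y₀ < 0 := key y₀ hy₀ne
  have hsup : sSup {m : ℝ | ∃ y : EuclideanSpace ℝ (Fin ℓ), ‖y‖ = 1 ∧ m = f y} = f y₀ := by
    rw [hset]
    exact IsGreatest.csSup_eq ⟨⟨y₀, hy₀mem, rfl⟩, fun m ⟨y, hy, hm⟩ => hm ▸ hy₀max hy⟩
  -- homogeneity of f
  have hhomog : ∀ (t : ℝ), 0 ≤ t → ∀ y : EuclideanSpace ℝ (Fin ℓ), f (t • y) = t * f y := by
    intro t ht y
    simp only [hf, real_inner_smul_right]
    rw [mul_min_of_nonneg _ _ ht, Real.mul_iInf_of_nonneg ht, mul_neg]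
  refine ⟨by rw [hsup]; exact hmax, -f y₀, by linarith, fun y => ?_⟩
  rcases eq_or_ne y 0 with rfl | hy
  · simp [hf, ciInf_const]
  · have hnorm : (0:ℝ) < ‖y‖ := norm_pos_iff.2 hy
    have hz : ‖(‖y‖⁻¹ • y : EuclideanSpace ℝ (Fin ℓ))‖ = 1 := by
      rw [norm_smul, norm_inv, norm_norm, inv_mul_cancel₀ hnorm.ne']
    have h1 : f (‖y‖⁻¹ • y) ≤ f y₀ := hy₀max (mem_sphere_zero_iff_norm.2 hz)
    have h2 : f y = ‖y‖ * f (‖y‖⁻¹ • y) := by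
      rw [← hhomog ‖y‖ hnorm.le, smul_smul, mul_inv_cancel₀ hnorm.ne', one_smul]
    rw [neg_neg]
    calc f y = ‖y‖ * f (‖y‖⁻¹ • y) := h2
      _ ≤ ‖y‖ * f y₀ := mul_le_mul_of_nonneg_left h1 hnorm.le
      _ = f y₀ * ‖y‖ := mul_comm _ _
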